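/- Let Aᵢ• (1 ≤ i ≤ 4) be complexes of R-modules with endomorphisms φᵢ, such that cup products ∪_A : A₁• ⊗ A₂• → A₃• and ∪_A : A₂• ⊗ A₁• → A₄• are compatible with the φᵢ. Suppose 𝒯₁, 𝒯₂ are endomorphisms of A₁•, A₂• commuting with φ₁, φ₂, and 𝒯₃₄ : A₃• → A₄• commutes with φ₃, φ₄, and the diagram ∪_A ∘ s₁₂ ∘ (𝒯₁ ⊗ 𝒯₂) = 𝒯₃₄ ∘ ∪_A commutes, where s₁₂(a ⊗ b) = (−1)^{deg a · deg b} b ⊗ a. Then on total complexes, the morphisms 𝒯₃₄ ∘ ∪_A^T and ∪_A^T ∘ s₁₂ ∘ (𝒯₁ ⊗ 𝒯₂) : T•(A₁•) ⊗ T•(A₂•) → T•(A₄•) are homotopic, with explicit homotopy h_𝒯((x_{n−1},x_n) ⊗ (y_{m−1},y_m)) = (−1)^{n−1}(𝒯₃₄(x_{n−1} ∪_A y_{m−1}), 0). -/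

import Mathlib

/-- A cochain complex of `R`-modules indexed by `ℤ`. -/
structure Cx (R : Type) [CommRing R] where
  X : ℤ → Type
  [ab : ∀ n, AddCommGroup (X n)]
  [md : ∀ n, Module R (X n)]
  d : ∀ n, X n →ₗ[R] X (n + 1)
  dsq : ∀ n (x : X n), d (n + 1) (d n x) = 0

attribute [instance] Cx.ab Cx.md

/-- A morphism of complexes of `R`-modules. -/
structure Mor {R : Type} [CommRing R] (A B : Cx R) where
  f : ∀ n, A.X n →ₗ[R] B.X n
  comm : ∀ n (x : A.X n), B.d n (f n x) = f (n + 1) (A.d n x)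

/-- The differential of the total complex `T•(A•) = Tot(A• --(φ-1)--> A•)`.
Here `T^{n+1}(A) = Aⁿ ⊕ Aⁿ⁺¹` and
`d(a_{n}, a_{n+1}) = (d a_n + (-1)^{n+1} (φ-1) a_{n+1}, d a_{n+1})`. -/
def Td {R : Type} [CommRing R] (A : Cx R) (φ : Mor A A) (n : ℤ)
    (p : A.X n × A.X (n + 1)) : A.X (n + 1) × A.X (n + 1 + 1) :=
  (A.d n p.1 + (Int.negOnePow (n + 1) : ℤ) • (φ.f (n + 1) p.2 - p.2),
    A.d (n + 1) p.2)

/-- The map induced on total complexes by a morphism `α` (componentwise). -/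
def Tmor {R : Type} [CommRing R] {A B : Cx R} (α : Mor A B) (n : ℤ)
    (p : A.X n × A.X (n + 1)) : B.X n × B.X (n + 1) :=
  (α.f n p.1, α.f (n + 1) p.2)
/-- A morphism of complexes `A• ⊗ B• → C•`, given by its bilinear components
`Aⁿ ⊗ Bᵐ → Cⁿ⁺ᵐ` satisfying the Leibniz rule
`d(x ∪ y) = dx ∪ y + (-1)ⁿ x ∪ dy`. -/
structure Cup {R : Type} [CommRing R] (A B C : Cx R) where
  c : ∀ n m k, n + m = k → A.X n →ₗ[R] B.X m →ₗ[R] C.X k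
  leib : ∀ (n m k : ℤ) (hk : n + m = k) (x : A.X n) (y : B.X m),
    C.d k (c n m k hk x y)
      = c (n + 1) m (k + 1) (by omega) (A.d n x) y
        + (Int.negOnePow n : ℤ) • c n (m + 1) (k + 1) (by omega) x (B.d m y)

/-- The cup product `∪ᵀ : T•(A₁•) ⊗ T•(A₂•) → T•(A₃•)` induced by
`∪ : A₁• ⊗ A₂• → A₃•`:
`(x_{n}, x_{n+1}) ∪ᵀ (y_{m}, y_{m+1}) =
  (x_{n+1} ∪ y_m + (-1)^{m+1} x_n ∪ φ₂(y_{m+1}), x_{n+1} ∪ y_{m+1})`. -/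
def cupT {R : Type} [CommRing R] {A₁ A₂ A₃ : Cx R} (φ₂ : Mor A₂ A₂)
    (cup : Cup A₁ A₂ A₃) (n m k : ℤ) (hk : n + m = k)
    (p : A₁.X n × A₁.X (n + 1)) (q : A₂.X m × A₂.X (m + 1)) :
    A₃.X (k + 1) × A₃.X (k + 1 + 1) :=
  (cup.c (n + 1) m (k + 1) (by omega) p.2 q.1
      + (Int.negOnePow (m + 1) : ℤ) •
          cup.c n (m + 1) (k + 1) (by omega) p.1 (φ₂.f (m + 1) q.2),
    cup.c (n + 1) (m + 1) (k + 1 + 1) (by omega) p.2 q.2)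

/-- The homotopy `h_𝒯((x_n,x_{n+1}) ⊗ (y_m,y_{m+1})) =
  (-1)^n (𝒯₃₄(x_n ∪ y_m), 0)`. -/
def hTrans {R : Type} [CommRing R] {A₁ A₂ A₃ A₄ : Cx R}
    (T34 : Mor A₃ A₄) (cup12 : Cup A₁ A₂ A₃)
    (n m k : ℤ) (hk : n + m = k)
    (p : A₁.X n × A₁.X (n + 1)) (q : A₂.X m × A₂.X (m + 1)) :
    A₄.X k × A₄.X (k + 1) :=
  ((Int.negOnePow n : ℤ) • T34.f k (cup12.c n m k hk p.1 q.1), 0)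

/-- Under the hypotheses a)–d) on `(Aᵢ•, φᵢ)` (1 ≤ i ≤ 4),
the endomorphisms `𝒯₁, 𝒯₂`, the morphism `𝒯₃₄` and the cup products
`∪_A : A₁ ⊗ A₂ → A₃`, `∪'_A : A₂ ⊗ A₁ → A₄`, the morphisms
`𝒯₃₄ ∘ ∪ᵀ_A` and `∪ᵀ_A ∘ s₁₂ ∘ (𝒯₁ ⊗ 𝒯₂)` on total complexes are homotopic,
with the explicit homotopy `h_𝒯(p ⊗ q) = (-1)^{deg p - 1}(𝒯₃₄(p₁ ∪ q₁), 0)`. -/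
theorem statement3 {R : Type} [CommRing R] (A₁ A₂ A₃ A₄ : Cx R)
    (φ₁ : Mor A₁ A₁) (φ₂ : Mor A₂ A₂) (φ₃ : Mor A₃ A₃) (φ₄ : Mor A₄ A₄)
    (cup12 : Cup A₁ A₂ A₃) (cup21 : Cup A₂ A₁ A₄)
    -- a) the triples (A₁,A₂,A₃) and (A₂,A₁,A₄) satisfy A1-2)
    (hcup12 : ∀ (n m k : ℤ) (hk : n + m = k) (x : A₁.X n) (y : A₂.X m),
      cup12.c n m k hk (φ₁.f n x) (φ₂.f m y) = φ₃.f k (cup12.c n m k hk x y))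
    (hcup21 : ∀ (n m k : ℤ) (hk : n + m = k) (y : A₂.X n) (x : A₁.X m),
      cup21.c n m k hk (φ₂.f n y) (φ₁.f m x) = φ₄.f k (cup21.c n m k hk y x))
    -- b) endomorphisms 𝒯₁, 𝒯₂ commuting with φ₁, φ₂
    (T1 : Mor A₁ A₁) (T2 : Mor A₂ A₂)
    (hT1 : ∀ (n : ℤ) (x : A₁.X n), T1.f n (φ₁.f n x) = φ₁.f n (T1.f n x))
    (hT2 : ∀ (n : ℤ) (x : A₂.X n), T2.f n (φ₂.f n x) = φ₂.f n (T2.f n x))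
    -- c) 𝒯₃₄ commuting with φ₃, φ₄
    (T34 : Mor A₃ A₄)
    (hT34 : ∀ (n : ℤ) (x : A₃.X n), T34.f n (φ₃.f n x) = φ₄.f n (T34.f n x))
    -- d) ∪'_A ∘ s₁₂ ∘ (𝒯₁ ⊗ 𝒯₂) = 𝒯₃₄ ∘ ∪_A
    (hsquare : ∀ (n m k : ℤ) (hk : n + m = k) (x : A₁.X n) (y : A₂.X m),
      (Int.negOnePow (n * m) : ℤ) • cup21.c m n k (by omega) (T2.f m y) (T1.f n x)
        = T34.f k (cup12.c n m k hk x y)) :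
    ∀ (n m k : ℤ) (hk : n + m = k)
      (p : A₁.X n × A₁.X (n + 1)) (q : A₂.X m × A₂.X (m + 1)),
      Td A₄ φ₄ k (hTrans T34 cup12 n m k hk p q)
          + hTrans T34 cup12 (n + 1) m (k + 1) (by omega) (Td A₁ φ₁ n p) q
          + (Int.negOnePow (n + 1) : ℤ) •
              hTrans T34 cup12 n (m + 1) (k + 1) (by omega) p (Td A₂ φ₂ m q)
        = (Int.negOnePow ((n + 1) * (m + 1)) : ℤ) •
              cupT φ₁ cup21 m n k (by omega) (Tmor T2 m q) (Tmor T1 n p)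
            - Tmor T34 (k + 1) (cupT φ₂ cup12 n m k hk p q) := by
  intro n m k hk p q
  have hsq : ∀ (n m k : ℤ) (hk : n + m = k) (h2 : m + n = k) (x : A₁.X n) (y : A₂.X m),
      cup21.c m n k h2 (T2.f m y) (T1.f n x)
        = (Int.negOnePow (n * m) : ℤ) • T34.f k (cup12.c n m k hk x y) := by
    intro n m k hk h2 x y
    have h := hsquare n m k hk x y
    calc cup21.c m n k h2 (T2.f m y) (T1.f n x)
        = (Int.negOnePow (n * m) : ℤ) •
            ((Int.negOnePow (n * m) : ℤ) • cup21.c m n k h2 (T2.f m y) (T1.f n x)) := by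
          rw [smul_smul]; simp
      _ = (Int.negOnePow (n * m) : ℤ) • T34.f k (cup12.c n m k hk x y) := by rw [h]
  simp only [Td, hTrans, cupT, Tmor, Prod.mk_add_mk, Prod.smul_mk, Prod.mk_sub_mk, smul_zero,
    add_zero, Prod.mk.injEq, map_zero, sub_zero]
  refine ⟨?_, ?_⟩
  · rw [map_zsmul, T34.comm, cup12.leib, ← hT1,
      hsq n (m + 1) (k + 1) (by omega) (by omega) p.1 q.2,
      hsq (n + 1) m (k + 1) (by omega) (by omega) (φ₁.f (n + 1) p.2) q.1]
    simp only [map_add, map_sub, map_smul, map_zsmul, LinearMap.add_apply, LinearMap.sub_apply,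
      LinearMap.smul_apply, smul_add, smul_sub, smul_smul]
    have hite : forall j : ℤ, ((Int.negOnePow j : ℤ)) = if Even j then 1 else -1 := by
      intro j
      rcases Int.even_or_odd j with h | h
      · simp [Int.negOnePow_even j h, h]
      · simp [Int.negOnePow_odd j h, ← Int.not_odd_iff_even, h]
    simp only [hite]
    by_cases hn : Odd n <;> by_cases hm : Odd m <;>
      simp [Int.even_add, Int.even_mul, ← Int.not_odd_iff_even, hn, hm, neg_smul, one_smul] <;>
      abel
  · rw [hsq (n + 1) (m + 1) (k + 1 + 1) (by omega) (by omega) p.2 q.2, smul_smul]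
    simp
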